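/- The submonoid S of M' = ℕ * Γ generated by the elements {a z_g a : g ∈ Γ} is a free monoid on the set Γ; that is, the monoid homomorphism from the free monoid ⟨Γ⟩ of words over Γ to S sending the letter g to a z_g a is an isomorphism, and it intertwines the involutions: (a z_g a)^* = a z_{g^{-1}} a corresponds to the word involution (g_1,…,g_k)^- = (g_k^{-1},…,g_1^{-1}). -/

import Mathlib

open Monoid Monoid.Coprod

/-- The free product monoid `M' = ℕ ∗ Γ`, generated by a symbol `a` (the generator of
`ℕ`, written multiplicatively) and the elements `z_g` (`g ∈ Γ`). -/
abbrev Mprime (Γ : Type*) [Group Γ] := Monoid.Coprod (Multiplicative ℕ) Γ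

/-- The generator `a` of `M' = ℕ ∗ Γ`. -/
def aGen (Γ : Type*) [Group Γ] : Mprime Γ := inl (Multiplicative.ofAdd 1)

/-- The submonoid `S` of `M' = ℕ ∗ Γ` generated by the elements `a z_g a`, `g ∈ Γ`. -/
def Smonoid (Γ : Type*) [Group Γ] : Submonoid (Mprime Γ) :=
  Submonoid.closure {x | ∃ g : Γ, x = aGen Γ * inr g * aGen Γ}

/-- The monoid homomorphism from the free monoid of words over `Γ` to `M' = ℕ ∗ Γ`
sending the letter `g` to `a z_g a`. -/
def wordsToS (Γ : Type*) [Group Γ] : FreeMonoid Γ →* Mprime Γ :=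
  FreeMonoid.lift fun g => aGen Γ * inr g * aGen Γ

/-- The involution of `M' = ℕ ∗ Γ` (an anti-automorphism): it fixes `a` and sends
`z_g` to `z_{g⁻¹}`, reversing products. It is obtained from the monoid homomorphism
`M' →* M'ᵐᵒᵖ` determined by `a ↦ op a`, `z_g ↦ op z_{g⁻¹}`. -/
noncomputable def MprimeStar (Γ : Type*) [Group Γ] : Mprime Γ → Mprime Γ :=
  fun x =>
    (Monoid.Coprod.lift
      (MonoidHom.mk ⟨fun n => MulOpposite.op ((inl n : Mprime Γ)), by simp⟩
        (fun m n => by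
          simp only [← MulOpposite.op_mul, ← map_mul]; rw [mul_comm]))
      ((MonoidHom.op (inr : Γ →* Mprime Γ)).comp (MulEquiv.inv' Γ).toMonoidHom) x).unop

/-- The involution on words over `Γ`: `(g_1,…,g_k)^- = (g_k⁻¹,…,g_1⁻¹)`. -/
def wInv {Γ : Type*} [Group Γ] (w : FreeMonoid Γ) : FreeMonoid Γ :=
  FreeMonoid.ofList ((w.toList.map (·⁻¹)).reverse)

open scoped Classical

namespace SFree
variable {Γ : Type*} [Group Γ]

/-- invariant for automaton states -/
def Good (s : List (Γ × ℕ) × ℕ) : Prop := ∀ p ∈ s.1, p.1 ≠ 1 ∧ 1 ≤ p.2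

noncomputable def actZfun (g : Γ) (s : List (Γ × ℕ) × ℕ) : List (Γ × ℕ) × ℕ :=
  if g = 1 then s
  else if 1 ≤ s.2 then ((g, s.2) :: s.1, 0)
  else match s.1 with
    | [] => s
    | (c, m) :: t => if g * c = 1 then (t, m) else ((g * c, m) :: t, 0)

def actAfun (s : List (Γ × ℕ) × ℕ) : List (Γ × ℕ) × ℕ := (s.1, s.2 + 1)

lemma actZfun_one (s : List (Γ × ℕ) × ℕ) : actZfun (1 : Γ) s = s := by simp [actZfun]

lemma actZ_pos {g : Γ} (hg : g ≠ 1) (l : List (Γ × ℕ)) {k : ℕ} (hk : 1 ≤ k) :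
    actZfun g (l, k) = ((g, k) :: l, 0) := by simp [actZfun, hg, hk]

lemma actZ_nil {g : Γ} (hg : g ≠ 1) : actZfun g (([] : List (Γ × ℕ)), 0) = ([], 0) := by
  simp [actZfun, hg]

lemma actZ_cons {g : Γ} (hg : g ≠ 1) (c : Γ) (m : ℕ) (t : List (Γ × ℕ)) :
    actZfun g ((c, m) :: t, 0) =
      if g * c = 1 then (t, m) else ((g * c, m) :: t, 0) := by
  simp [actZfun, hg]

lemma good_actA {s : List (Γ × ℕ) × ℕ} (hs : Good s) : Good (actAfun s) := hs

lemma good_actZ (g : Γ) {s : List (Γ × ℕ) × ℕ} (hs : Good s) : Good (actZfun g s) := by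
  by_cases hg : g = 1
  · simpa [hg, actZfun_one] using hs
  rcases s with ⟨l, k⟩
  rcases Nat.eq_zero_or_pos k with hk | hk
  · subst hk
    rcases l with _ | ⟨⟨c, m⟩, t⟩
    · simpa [actZ_nil hg] using hs
    · have hc := hs (c, m) List.mem_cons_self
      rw [actZ_cons hg]
      split
      · exact fun p hp => hs p (List.mem_cons_of_mem _ hp)
      · intro p hp
        rcases List.mem_cons.mp hp with hp | hp
        · subst hp; exact ⟨by assumption, hc.2⟩
        · exact hs p (List.mem_cons_of_mem _ hp)
  · rw [actZ_pos hg _ hk]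
    intro p hp
    rcases List.mem_cons.mp hp with hp | hp
    · subst hp; exact ⟨hg, hk⟩
    · exact hs p hp

lemma actZfun_mul (g h : Γ) (s : List (Γ × ℕ) × ℕ) (hs : Good s) :
    actZfun (g * h) s = actZfun g (actZfun h s) := by
  by_cases hg : g = 1
  · subst hg; simp [actZfun_one, one_mul]
  by_cases hh : h = 1
  · subst hh; simp [actZfun_one, mul_one]
  rcases s with ⟨l, k⟩
  rcases Nat.eq_zero_or_pos k with hk | hk
  · subst hk
    rcases l with _ | ⟨⟨c, m⟩, t⟩
    · by_cases hgh : g * h = 1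
      · rw [hgh, actZfun_one, actZ_nil hh, actZ_nil hg]
      · rw [actZ_nil hh, actZ_nil hgh, actZ_nil hg]
    · have hc : c ≠ 1 := (hs (c, m) List.mem_cons_self).1
      have hm : 1 ≤ m := (hs (c, m) List.mem_cons_self).2
      by_cases hhc : h * c = 1
      · have hcv : c = h⁻¹ := eq_inv_of_mul_eq_one_right hhc
        rw [actZ_cons hh, if_pos hhc, actZ_pos hg _ hm]
        by_cases hgh : g * h = 1
        · have : g = h⁻¹ := eq_inv_of_mul_eq_one_left hgh
          rw [hgh, actZfun_one, hcv, ← this]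
        · rw [actZ_cons hgh, if_neg (by rw [hcv]; group; simpa using hg)]
          congr 2
          rw [hcv]; group
      · rw [actZ_cons hh, if_neg hhc, actZ_cons hg]
        by_cases hgh : g * h = 1
        · have hgi : g = h⁻¹ := eq_inv_of_mul_eq_one_left hgh
          rw [hgh, actZfun_one, if_neg (by rw [hgi]; group; simpa using hc)]
          congr 2
          rw [hgi]; group
        · rw [actZ_cons hgh, mul_assoc]
  · rw [actZ_pos hh _ hk]
    by_cases hgh : g * h = 1
    · rw [hgh, actZfun_one, actZ_cons hg, if_pos hgh]
    · rw [actZ_pos hgh _ hk, actZ_cons hg, if_neg hgh]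

variable {Γ : Type*} [Group Γ]

def X (Γ : Type*) [Group Γ] := {s : List (Γ × ℕ) × ℕ // Good s}

noncomputable def actZ (g : Γ) : Function.End (X Γ) :=
  fun x => ⟨actZfun g x.1, good_actZ g x.2⟩

def actA : Function.End (X Γ) := fun x => ⟨actAfun x.1, good_actA x.2⟩

noncomputable def zHom : Γ →* Function.End (X Γ) where
  toFun := actZ
  map_one' := funext fun x => Subtype.ext (actZfun_one _)
  map_mul' g h := funext fun x => Subtype.ext (actZfun_mul g h x.1 x.2)

noncomputable def phi (Γ : Type*) [Group Γ] : Mprime Γ →* Function.End (X Γ) :=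
  Monoid.Coprod.lift (powersHom (Function.End (X Γ)) actA) zHom

lemma phi_aGen : phi Γ (aGen Γ) = actA := by
  rw [aGen, phi, Monoid.Coprod.lift_apply_inl, powersHom_apply]
  simp

lemma phi_inr (g : Γ) : phi Γ (inr g) = actZ g :=
  Monoid.Coprod.lift_apply_inr _ _ _

noncomputable def encode : List Γ → List (Γ × ℕ) × ℕ
  | [] => ([], 0)
  | g :: w =>
      if g = 1 then ((encode w).1, (encode w).2 + 2)
      else ((g, (encode w).2 + 1) :: (encode w).1, 1)

lemma good_encode (w : List Γ) : Good (encode w) := by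
  induction w with
  | nil => rintro p hp; simp [encode] at hp
  | cons g t ih =>
      rw [encode]
      split
      · exact fun p hp => ih p hp
      · intro p hp
        rcases List.mem_cons.mp hp with hp | hp
        · subst hp; exact ⟨by assumption, by omega⟩
        · exact ih p hp

lemma encode_pos (w : List Γ) (h : (encode w).1 ≠ []) : 1 ≤ (encode w).2 := by
  induction w with
  | nil => simp [encode] at h
  | cons g t ih =>
      rw [encode] at h ⊢
      split at h <;> simp_all <;> omega

def decode : List (Γ × ℕ) → ℕ → List Γ
  | [], k => List.replicate (k / 2) 1
  | (g, m) :: t, k => List.replicate ((k - 1) / 2) 1 ++ g :: decode t (m - 1)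

lemma decode_encode (w : List Γ) : decode (encode w).1 (encode w).2 = w := by
  induction w with
  | nil => simp [encode, decode]
  | cons g t ih =>
      rw [encode]
      by_cases hg : g = 1
      · rw [if_pos hg]
        rcases hl : (encode t).1 with _ | ⟨⟨c, m⟩, r⟩
        · rw [hl] at ih
          rw [decode] at ih ⊢
          have : ((encode t).2 + 2) / 2 = (encode t).2 / 2 + 1 := by omega
          rw [this, List.replicate_succ, hg, ih]
        · have hk : 1 ≤ (encode t).2 := encode_pos t (by rw [hl]; simp)
          rw [hl] at ih
          rw [decode] at ih ⊢
          have : ((encode t).2 + 2 - 1) / 2 = ((encode t).2 - 1) / 2 + 1 := by omega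
          rw [this, List.replicate_succ, hg, List.cons_append, ih]
      · rw [if_neg hg, decode]
        simp [ih]

def x0 (Γ : Type*) [Group Γ] : X Γ := ⟨([], 0), by rintro p hp; simp at hp⟩

lemma phi_words (w : List Γ) :
    (phi Γ (wordsToS Γ (FreeMonoid.ofList w)) (x0 Γ)).1 = encode w := by
  induction w with
  | nil => rw [FreeMonoid.ofList_nil, map_one, map_one]; rfl
  | cons g t ih =>
      rw [FreeMonoid.ofList_cons, map_mul, map_mul]
      have hof : wordsToS Γ (FreeMonoid.of g) = aGen Γ * inr g * aGen Γ :=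
        FreeMonoid.lift_eval_of _ g
      rw [hof, map_mul, map_mul, phi_aGen, phi_inr]
      set s := phi Γ (wordsToS Γ (FreeMonoid.ofList t)) (x0 Γ) with hs
      show (actA (actZ g (actA s))).1 = encode (g :: t)
      have h1 : (actA s).1 = ((encode t).1, (encode t).2 + 1) := by
        show (s.1.1, s.1.2 + 1) = _
        rw [ih]
      have h2 : (actZ g (actA s)).1 = actZfun g ((encode t).1, (encode t).2 + 1) := by
        show actZfun g (actA s).1 = _
        rw [h1]
      by_cases hg : g = 1
      · subst hg
        rw [actZfun_one] at h2
        show actAfun (actZ 1 (actA s)).1 = _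
        rw [h2, encode, if_pos rfl]
        rfl
      · rw [actZ_pos hg _ (by omega)] at h2
        show actAfun (actZ g (actA s)).1 = _
        rw [h2, encode, if_neg hg]
        rfl

lemma wordsToS_injective : Function.Injective (wordsToS Γ) := by
  intro w w' h
  have key : ∀ v : FreeMonoid Γ,
      decode (phi Γ (wordsToS Γ v) (x0 Γ)).1.1 (phi Γ (wordsToS Γ v) (x0 Γ)).1.2
        = FreeMonoid.toList v := by
    intro v
    have h1 := phi_words (Γ := Γ) (FreeMonoid.toList v)
    rw [FreeMonoid.ofList_toList] at h1
    rw [h1, decode_encode]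
  have := key w
  rw [h, key w'] at this
  exact FreeMonoid.toList.injective this.symm

lemma wordsToS_range : MonoidHom.mrange (wordsToS Γ) = Smonoid Γ := by
  apply le_antisymm
  · rintro x ⟨w, rfl⟩
    have : ∀ l : List Γ, wordsToS Γ (FreeMonoid.ofList l) ∈ Smonoid Γ := by
      intro l
      induction l with
      | nil => rw [FreeMonoid.ofList_nil, map_one]; exact one_mem _
      | cons g t ih =>
          rw [FreeMonoid.ofList_cons, map_mul]
          exact mul_mem
            (Submonoid.subset_closure ⟨g, FreeMonoid.lift_eval_of _ g⟩) ih
    simpa [FreeMonoid.ofList_toList] using this (FreeMonoid.toList w)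
  · rw [Smonoid]
    apply Submonoid.closure_le.mpr
    rintro x ⟨g, rfl⟩
    exact ⟨FreeMonoid.of g, FreeMonoid.lift_eval_of _ g⟩

lemma star_mul' (x y : Mprime Γ) :
    MprimeStar Γ (x * y) = MprimeStar Γ y * MprimeStar Γ x := by
  unfold MprimeStar
  rw [map_mul]
  rfl

lemma star_aGen : MprimeStar Γ (aGen Γ) = aGen Γ := by
  unfold MprimeStar aGen
  rw [Monoid.Coprod.lift_apply_inl]
  rfl

lemma star_inr (g : Γ) : MprimeStar Γ (inr g) = inr g⁻¹ := by
  unfold MprimeStar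
  rw [Monoid.Coprod.lift_apply_inr]
  rfl

lemma star_words (w : FreeMonoid Γ) :
    MprimeStar Γ (wordsToS Γ w) = wordsToS Γ (wInv w) := by
  have main : ∀ l : List Γ,
      MprimeStar Γ (wordsToS Γ (FreeMonoid.ofList l))
        = wordsToS Γ (wInv (FreeMonoid.ofList l)) := by
    intro l
    induction l with
    | nil =>
        rw [FreeMonoid.ofList_nil, map_one]
        have : MprimeStar Γ (1 : Mprime Γ) = 1 := by
          unfold MprimeStar; rw [map_one]; rfl
        rw [this, wInv]
        simp [FreeMonoid.toList_one]
    | cons g t ih =>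
        rw [FreeMonoid.ofList_cons, map_mul]
        have hof : wordsToS Γ (FreeMonoid.of g) = aGen Γ * inr g * aGen Γ :=
          FreeMonoid.lift_eval_of _ g
        have hstar : MprimeStar Γ (wordsToS Γ (FreeMonoid.of g))
            = aGen Γ * inr g⁻¹ * aGen Γ := by
          rw [hof, star_mul', star_mul', star_aGen, star_inr, ← mul_assoc]
        have hwinv : wInv (FreeMonoid.of g * FreeMonoid.ofList t)
            = wInv (FreeMonoid.ofList t) * FreeMonoid.of g⁻¹ := by
          rw [← FreeMonoid.ofList_cons, wInv, wInv]
          simp [FreeMonoid.toList_ofList, FreeMonoid.ofList_append,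
            FreeMonoid.ofList_singleton]
        have hof2 : wordsToS Γ (FreeMonoid.of g⁻¹) = aGen Γ * inr g⁻¹ * aGen Γ :=
          FreeMonoid.lift_eval_of _ g⁻¹
        rw [star_mul', hstar, ih, hwinv, map_mul, hof2]
  have := main (FreeMonoid.toList w)
  rwa [FreeMonoid.ofList_toList] at this

end SFree

/-- The submonoid `S ⊆ ℕ ∗ Γ` generated by `{a z_g a : g ∈ Γ}` is a free monoid on `Γ`:
the monoid homomorphism `⟨Γ⟩ → M'` sending `g` to `a z_g a` is injective with range `S`
(hence an isomorphism of `⟨Γ⟩` onto `S`), and it intertwines the involutions: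
`(a z_{g_1} a ⋯ a z_{g_k} a)^* = a z_{g_k⁻¹} a ⋯ a z_{g_1⁻¹} a`. -/

theorem S_free_monoid_on_Gamma (Γ : Type*) [Group Γ] :
    Function.Injective (wordsToS Γ) ∧
    MonoidHom.mrange (wordsToS Γ) = Smonoid Γ ∧
    ∀ w : FreeMonoid Γ, MprimeStar Γ (wordsToS Γ w) = wordsToS Γ (wInv w) :=
  ⟨SFree.wordsToS_injective, SFree.wordsToS_range, SFree.star_words⟩
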